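/- Let T^{(l)}_j, 1 ≤ j ≤ n_l, 1 ≤ l ≤ L, be mutually independent nonnegative random variables such that all type-l lifetimes have common continuous distribution function F_l, and suppose the type-i distribution is absolutely continuous with density f_i. Let T := min_{1≤l≤L} max_{1≤j≤n_l} T^{(l)}_j be the lifetime of the series-parallel system (a series connection of L parallel subsystems, subsystem l consisting of the n_l components of type l). Then E[ #{ j : T^{(i)}_j ≤ T } ] = n_i ∫_0^∞ ( ∏_{l≠i} (1 − F_l(t)^{n_l}) ) f_i(t) dt. -/

import Mathlib

open MeasureTheory Finset ProbabilityTheory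

lemma iIndep_grouping {Ω ι κ : Type*} {mΩ : MeasurableSpace Ω} {μ : Measure Ω}
    (m : ι → MeasurableSpace Ω) (hle : ∀ i, m i ≤ mΩ)
    (h : iIndep m μ) (g : ι → κ) :
    iIndep (fun k => ⨆ i ∈ {i | g i = k}, m i) μ := by
  classical
  refine iIndepSets.iIndep (fun k => iSup₂_le fun i _ => hle i)
    (fun k => piiUnionInter (fun i => {s | MeasurableSet[m i] s}) {i | g i = k})
    (fun k => isPiSystem_piiUnionInter _ (fun i => @MeasurableSpace.isPiSystem_measurableSet Ω (m i)) _)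
    (fun k => (generateFrom_piiUnionInter_measurableSet m _).symm) ?_
  rw [iIndepSets_iff]
  intro s f hf
  have h' : ∀ k : κ, ∃ (t : Finset ι) (sf : ι → Set Ω),
      (↑t ⊆ {i | g i = k}) ∧ (∀ i ∈ t, MeasurableSet[m i] (sf i)) ∧
      (k ∈ s → f k = ⋂ i ∈ t, sf i) := by
    intro k
    by_cases hk : k ∈ s
    · obtain ⟨t, hts, sf, hsf, hfk⟩ := hf k hk
      exact ⟨t, sf, hts, hsf, fun _ => hfk⟩
    · exact ⟨∅, fun _ => Set.univ, by simp, by simp, fun hks => absurd hks hk⟩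
  choose t sf hts hsf hfk using h'
  have hg : ∀ k, ∀ i ∈ t k, g i = k := fun k i hi => hts k hi
  set G : ι → Set Ω := fun i => sf (g i) i with hG
  have hGt : ∀ k, ∀ i ∈ t k, G i = sf k i := by
    intro k i hi; simp only [hG, hg k i hi]
  have hdisj : (↑s : Set κ).PairwiseDisjoint t := by
    intro a _ b _ hab
    refine Finset.disjoint_left.mpr fun i hia hib => hab ?_
    rw [← hg a i hia, hg b i hib]
  have step1 : (⋂ k ∈ s, f k) = ⋂ i ∈ s.biUnion t, G i := by
    ext x
    simp only [Set.mem_iInter, Finset.mem_biUnion]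
    constructor
    · rintro hx i ⟨k, hk, hik⟩
      have := hx k hk
      rw [hfk k hk] at this
      rw [hGt k i hik]
      exact Set.mem_iInter₂.1 this i hik
    · intro hx k hk
      rw [hfk k hk]
      refine Set.mem_iInter₂.2 fun i hik => ?_
      rw [← hGt k i hik]
      exact hx i ⟨k, hk, hik⟩
  have hGmeas : ∀ i ∈ s.biUnion t, MeasurableSet[m i] (G i) := by
    intro i hi
    obtain ⟨k, hk, hik⟩ := Finset.mem_biUnion.1 hi
    rw [hGt k i hik]
    exact hsf k i hik
  rw [step1, h.meas_biInter hGmeas, Finset.prod_biUnion hdisj]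
  refine Finset.prod_congr rfl fun k hk => ?_
  rw [Finset.prod_congr rfl (fun i hi => by rw [hGt k i hi]),
    ← h.meas_biInter (hsf k), ← hfk k hk]

set_option maxHeartbeats 1000000 in
theorem stmt_13
    {Ω : Type*} [MeasurableSpace Ω] (P : Measure Ω) [IsProbabilityMeasure P]
    {L : ℕ} (hL : 0 < L) (n : Fin L → ℕ) (hn : ∀ l, 1 ≤ n l)
    (T : (l : Fin L) → Fin (n l) → Ω → ℝ)
    (hTmeas : ∀ l j, Measurable (T l j))
    (hTnn : ∀ l j ω, 0 ≤ T l j ω)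
    (hindep : iIndepFun
      (fun p : Σ l : Fin L, Fin (n l) => fun ω => T p.1 p.2 ω) P)
    (F : Fin L → ℝ → ℝ)
    (hF : ∀ l j x, (P {ω | T l j ω ≤ x}).toReal = F l x)
    (hFcont : ∀ l, Continuous (F l))
    (i : Fin L) (f : ℝ → ℝ) (hfmeas : Measurable f) (hfnn : ∀ x, 0 ≤ f x)
    (hdens : ∀ x : ℝ, F i x = ∫ s in Set.Iic x, f s) :
    ∫ ω, ((Finset.univ.filter fun j : Fin (n i) =>
        T i j ω ≤
          Finset.univ.inf' (Finset.univ_nonempty_iff.mpr (Fin.pos_iff_nonempty.mp hL))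
            (fun l : Fin L =>
              Finset.univ.sup'
                (Finset.univ_nonempty_iff.mpr (Fin.pos_iff_nonempty.mp (hn l)))
                (fun r : Fin (n l) => T l r ω))).card : ℝ) ∂P
    = (n i : ℝ) *
        ∫ t in Set.Ioi (0 : ℝ),
          (∏ l ∈ Finset.univ.erase i, (1 - F l t ^ (n l))) * f t := by
  classical
  have hne : ∀ l : Fin L, (Finset.univ : Finset (Fin (n l))).Nonempty :=
    fun l => Finset.univ_nonempty_iff.mpr (Fin.pos_iff_nonempty.mp (hn l))
  set M : Fin L → Ω → ℝ := fun l ω => Finset.univ.sup' (hne l) fun r => T l r ω with hM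
  have hMmeas : ∀ l, Measurable (M l) := by
    intro l
    have := Finset.measurable_sup' (hne l) (f := fun r (ω : Ω) => T l r ω)
      (fun r _ => hTmeas l r)
    convert this using 1
    ext ω
    simp [hM, Finset.sup'_apply]
  -- basic CDF facts
  have hF01 : ∀ l x, 0 ≤ F l x ∧ F l x ≤ 1 := by
    intro l x
    rw [← hF l ⟨0, hn l⟩ x]
    constructor
    · exact ENNReal.toReal_nonneg
    · exact ENNReal.toReal_le_of_le_ofReal zero_le_one (by simpa using prob_le_one)
  have hle : ∀ l r x, P {ω | T l r ω ≤ x} = ENNReal.ofReal (F l x) := by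
    intro l r x
    rw [← hF l r x, ENNReal.ofReal_toReal (measure_ne_top P _)]
  have hFneg : ∀ l x, x < 0 → F l x = 0 := by
    intro l x hx
    rw [← hF l ⟨0, hn l⟩ x]
    have : {ω | T l ⟨0, hn l⟩ ω ≤ x} = ∅ := by
      ext ω; simp only [Set.mem_setOf_eq, Set.mem_empty_iff_false, iff_false, not_le]
      exact lt_of_lt_of_le hx (hTnn l _ ω)
    rw [this]; simp
  have hlt : ∀ l r t, P {ω | T l r ω < t} = ENNReal.ofReal (F l t) := by
    intro l r t
    have hmono : Monotone (fun k : ℕ => {ω | T l r ω ≤ t - 1/(k+1)}) := by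
      intro a b hab ω h
      refine le_trans h (sub_le_sub_left ?_ t)
      apply one_div_le_one_div_of_le (by positivity)
      exact_mod_cast Nat.succ_le_succ hab
    have hunion : (⋃ k : ℕ, {ω | T l r ω ≤ t - 1/(k+1)}) = {ω | T l r ω < t} := by
      ext ω
      simp only [Set.mem_iUnion, Set.mem_setOf_eq]
      constructor
      · rintro ⟨k, hk⟩
        have : (0:ℝ) < 1/(k+1) := by positivity
        linarith
      · intro h
        obtain ⟨k, hk⟩ := exists_nat_one_div_lt (sub_pos.mpr h)
        exact ⟨k, by push_cast at hk ⊢; linarith⟩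
    have h1 := tendsto_measure_iUnion_atTop (μ := P) hmono
    rw [hunion] at h1
    have h2 : Filter.Tendsto (fun k : ℕ => P {ω | T l r ω ≤ t - 1/(k+1)})
        Filter.atTop (nhds (ENNReal.ofReal (F l t))) := by
      simp only [hle l r]
      refine (ENNReal.continuous_ofReal.tendsto _).comp (((hFcont l).tendsto t).comp ?_)
      have h0 : Filter.Tendsto (fun k : ℕ => 1/((k:ℝ)+1)) Filter.atTop (nhds 0) :=
        tendsto_one_div_add_atTop_nhds_zero_nat
      simpa using (tendsto_const_nhds : Filter.Tendsto (fun _ : ℕ => t) Filter.atTop (nhds t)).sub h0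
    exact tendsto_nhds_unique h1 h2
  have hMlt : ∀ l t, P {ω | M l ω < t} = ENNReal.ofReal (F l t) ^ (n l) := by
    intro l t
    set sσ : (Σ l', Fin (n l')) → Set Ω := fun p => {ω | T p.1 p.2 ω < t} with hsσ
    set S : Finset (Σ l', Fin (n l')) :=
      Finset.univ.map ⟨Sigma.mk l, sigma_mk_injective⟩ with hS
    have hset : {ω | M l ω < t} = ⋂ p ∈ S, sσ p := by
      ext ω
      simp only [Set.mem_setOf_eq, Set.mem_iInter, hS, Finset.mem_map,
        Function.Embedding.coeFn_mk, hM]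
      rw [Finset.sup'_lt_iff]
      constructor
      · rintro h p ⟨r, _, rfl⟩
        exact h r (Finset.mem_univ r)
      · intro h r _
        exact h ⟨l, r⟩ ⟨r, Finset.mem_univ r, rfl⟩
    have hmeas' : ∀ p ∈ S, MeasurableSet[MeasurableSpace.comap
        (fun ω => T p.1 p.2 ω) inferInstance] (sσ p) :=
      fun p _ => ⟨Set.Iio t, measurableSet_Iio, rfl⟩
    rw [hset, hindep.meas_biInter hmeas', hS, Finset.prod_map]
    simp only [Function.Embedding.coeFn_mk]
    rw [Finset.prod_congr rfl (fun r _ => hlt l r t), Finset.prod_const,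
      Finset.card_univ, Fintype.card_fin]
  have hMle : ∀ l t, MeasurableSet {ω | t ≤ M l ω} := by
    intro l t
    exact (hMmeas l) measurableSet_Ici
  have hMprob : ∀ l t, P {ω | t ≤ M l ω} = 1 - ENNReal.ofReal (F l t) ^ (n l) := by
    intro l t
    have : {ω | t ≤ M l ω} = {ω | M l ω < t}ᶜ := by
      ext ω; simp [not_lt]
    have hms : MeasurableSet {ω | M l ω < t} := (hMmeas l) measurableSet_Iio
    rw [this, prob_compl_eq_one_sub hms, hMlt]
  -- grouped independence and the product rule for the maxima events
  have hprod : ∀ t : ℝ, P (⋂ l ∈ Finset.univ.erase i, {ω | t ≤ M l ω})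
      = ∏ l ∈ Finset.univ.erase i, (1 - ENNReal.ofReal (F l t) ^ (n l)) := by
    have hgrp := iIndep_grouping _ (fun p : Σ l : Fin L, Fin (n l) =>
      (hTmeas p.1 p.2).comap_le) hindep.iIndep Sigma.fst
    intro t
    rw [hgrp.meas_biInter (S := Finset.univ.erase i)
      (s := fun l => {ω | t ≤ M l ω}) (fun l _ => ?_)]
    · exact Finset.prod_congr rfl fun l _ => hMprob l t
    · have hset : {ω | t ≤ M l ω} = ⋃ r : Fin (n l), (fun ω => T l r ω) ⁻¹' Set.Ici t := by
        ext ω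
        simp only [Set.mem_setOf_eq, Set.mem_iUnion, Set.mem_preimage, Set.mem_Ici, hM]
        rw [Finset.le_sup'_iff]
        exact ⟨fun ⟨r, _, h⟩ => ⟨r, h⟩, fun ⟨r, h⟩ => ⟨r, Finset.mem_univ r, h⟩⟩
      refine MeasurableSet.congr (MeasurableSet.iUnion fun r => ?_) hset.symm
      have hle2 := le_iSup₂ (f := fun (p : Σ l', Fin (n l')) (_ : p ∈ {p : Σ l', Fin (n l') | p.1 = l}) =>
        MeasurableSpace.comap ((fun q : Σ l', Fin (n l') => fun ω => T q.1 q.2 ω) p) inferInstance)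
        (⟨l, r⟩ : Σ l', Fin (n l')) rfl
      exact hle2 _ ⟨Set.Ici t, measurableSet_Ici, rfl⟩
  -- identify the law of a type-i lifetime with the density measure
  have hmono_F : Monotone (F i) := by
    intro a b hab
    rw [← hF i ⟨0, hn i⟩ a, ← hF i ⟨0, hn i⟩ b]
    exact ENNReal.toReal_mono (measure_ne_top P _)
      (measure_mono fun ω h => le_trans h hab)
  have hx0 : ∃ x0 : ℝ, 0 < F i x0 := by
    by_contra h
    push_neg at h
    have hzero : ∀ x : ℝ, P {ω | T i ⟨0, hn i⟩ ω ≤ x} = 0 := by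
      intro x
      rw [hle i ⟨0, hn i⟩ x, ENNReal.ofReal_eq_zero.mpr (h x)]
    have huniv : (⋃ k : ℕ, {ω | T i ⟨0, hn i⟩ ω ≤ (k : ℝ)}) = Set.univ := by
      ext ω
      simp only [Set.mem_iUnion, Set.mem_setOf_eq, Set.mem_univ, iff_true]
      exact exists_nat_ge (T i ⟨0, hn i⟩ ω)
    have h1 : P Set.univ = 0 := by
      rw [← huniv]
      exact measure_iUnion_null fun k => hzero k
    simp at h1
  obtain ⟨x0, hx0⟩ := hx0
  have hInt : ∀ x, IntegrableOn f (Set.Iic x) := by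
    intro x
    by_contra hni
    have hni' : ¬ IntegrableOn f (Set.Iic (max x x0)) := fun hI =>
      hni (hI.mono_set (Set.Iic_subset_Iic.mpr (le_max_left x x0)))
    have h0 : F i (max x x0) = 0 := by rw [hdens]; exact integral_undef hni'
    have h1 := hmono_F (le_max_right x x0)
    linarith
  set w : Measure ℝ := volume.withDensity (fun s => ENNReal.ofReal (f s)) with hw
  have hwIic : ∀ x, w (Set.Iic x) = ENNReal.ofReal (F i x) := by
    intro x
    rw [hw, withDensity_apply _ measurableSet_Iic,
      ← ofReal_integral_eq_lintegral_ofReal (hInt x)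
        (Filter.Eventually.of_forall fun s => hfnn s), hdens]
  have hwfin : IsFiniteMeasure w := by
    have hu : (⋃ k : ℕ, Set.Iic (k : ℝ)) = Set.univ := by
      ext x
      simp only [Set.mem_iUnion, Set.mem_Iic, Set.mem_univ, iff_true]
      exact exists_nat_ge x
    have hten := tendsto_measure_iUnion_atTop (μ := w) (s := fun k : ℕ => Set.Iic (k:ℝ))
      (fun a b hab => Set.Iic_subset_Iic.mpr (by exact_mod_cast hab))
    rw [hu] at hten
    have hbd : ∀ k : ℕ, w (Set.Iic (k : ℝ)) ≤ 1 := by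
      intro k
      rw [hwIic]
      exact ENNReal.ofReal_le_one.mpr (hF01 i k).2
    exact ⟨lt_of_le_of_lt (le_of_tendsto' hten hbd) ENNReal.one_lt_top⟩
  have hmap : ∀ j : Fin (n i), P.map (T i j) = w := by
    intro j
    have hpm : IsProbabilityMeasure (P.map (T i j)) :=
      Measure.isProbabilityMeasure_map (hTmeas i j).aemeasurable
    refine Measure.ext_of_Iic (P.map (T i j)) w fun x => ?_
    rw [Measure.map_apply (hTmeas i j) measurableSet_Iic, hwIic]
    exact hle i j x
  have hFi0 : F i 0 = 0 := by
    have h1 : Filter.Tendsto (F i) (nhdsWithin 0 (Set.Iio 0)) (nhds (F i 0)) :=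
      ((hFcont i).tendsto 0).mono_left nhdsWithin_le_nhds
    have h2 : Filter.Tendsto (F i) (nhdsWithin 0 (Set.Iio 0)) (nhds 0) := by
      refine Filter.Tendsto.congr' ?_ tendsto_const_nhds
      filter_upwards [self_mem_nhdsWithin] with x hx
      exact (hFneg i x hx).symm
    haveI : (nhdsWithin (0:ℝ) (Set.Iio 0)).NeBot := nhdsLT_neBot 0
    exact tendsto_nhds_unique h1 h2
  -- the events and their probabilities
  set A : Fin (n i) → Set Ω :=
    fun j => {ω | ∀ l ∈ Finset.univ.erase i, T i j ω ≤ M l ω} with hA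
  have hAmeas : ∀ j, MeasurableSet (A j) := by
    intro j
    have hAeq : A j = ⋂ l ∈ Finset.univ.erase i, {ω | T i j ω ≤ M l ω} := by
      ext ω; simp [hA, Set.mem_iInter]
    rw [hAeq]
    exact MeasurableSet.biInter (Set.to_countable _)
      fun l _ => measurableSet_le (hTmeas i j) (hMmeas l)
  set gE : ℝ → ENNReal :=
    fun t => ∏ l ∈ Finset.univ.erase i, (1 - ENNReal.ofReal (F l t) ^ (n l)) with hgE
  have hgEmeas : Measurable gE := by
    refine Finset.measurable_prod _ fun l _ => ?_
    exact measurable_const.sub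
      ((ENNReal.measurable_ofReal.comp (hFcont l).measurable).pow_const _)
  have hgE1 : ∀ t, gE t ≤ 1 :=
    fun t => Finset.prod_le_one (fun l _ => zero_le) (fun l _ => tsub_le_self)
  have hPA : ∀ j : Fin (n i), P (A j) = ∫⁻ t, gE t ∂w := by
    intro j
    set Y : Ω → (Fin L → ℝ) := fun ω l => if h : l = i then 0 else M l ω with hY
    have hYmeas : Measurable Y := by
      rw [hY]
      refine measurable_pi_lambda _ fun l => ?_
      by_cases h : l = i
      · simpa [h] using (measurable_const : Measurable fun _ : Ω => (0:ℝ))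
      · simpa [h] using hMmeas l
    have hXY : IndepFun (T i j) Y P := by
      have hdisjS : Disjoint ({⟨i, j⟩} : Finset (Σ l, Fin (n l)))
          (Finset.univ.filter fun p : Σ l, Fin (n l) => p.1 ≠ i) := by
        simp [Finset.disjoint_left]
      have hbase := hindep.indepFun_finset {⟨i, j⟩}
        (Finset.univ.filter fun p : Σ l, Fin (n l) => p.1 ≠ i) hdisjS
        (fun p => hTmeas p.1 p.2)
      have hmem : ∀ (l : Fin L) (_ : ¬ l = i) (r : Fin (n l)),
          (⟨l, r⟩ : Σ l, Fin (n l)) ∈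
            (Finset.univ.filter fun p : Σ l, Fin (n l) => p.1 ≠ i) := by
        intro l h r
        simp [h]
      set φ : (({⟨i, j⟩} : Finset (Σ l, Fin (n l))) → ℝ) → ℝ :=
        fun y => y ⟨⟨i, j⟩, Finset.mem_singleton_self _⟩ with hφ
      set ψ : (((Finset.univ.filter fun p : Σ l, Fin (n l) => p.1 ≠ i) :
          Finset (Σ l, Fin (n l))) → ℝ) → (Fin L → ℝ) :=
        fun y l => if h : l = i then 0
          else Finset.univ.sup' (hne l) (fun r => y ⟨⟨l, r⟩, hmem l h r⟩) with hψ
      have hφm : Measurable φ := measurable_pi_apply _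
      have hψm : Measurable ψ := by
        rw [hψ]
        refine measurable_pi_lambda _ fun l => ?_
        by_cases h : l = i
        · simpa [h] using (measurable_const :
            Measurable fun _ : (((Finset.univ.filter
              fun p : Σ l, Fin (n l) => p.1 ≠ i) : Finset (Σ l, Fin (n l))) → ℝ) => (0:ℝ))
        · have hm := Finset.measurable_sup' (hne l)
            (f := fun (r : Fin (n l)) (y : ((Finset.univ.filter
              fun p : Σ l, Fin (n l) => p.1 ≠ i) : Finset (Σ l, Fin (n l))) → ℝ) =>
                y ⟨⟨l, r⟩, hmem l h r⟩)
            (fun r _ => measurable_pi_apply _)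
          have heq : (fun y : ((Finset.univ.filter
              fun p : Σ l, Fin (n l) => p.1 ≠ i) : Finset (Σ l, Fin (n l))) → ℝ =>
              (if hli : l = i then 0
                else Finset.univ.sup' (hne l) (fun r => y ⟨⟨l, r⟩, hmem l hli r⟩)))
              = Finset.univ.sup' (hne l) (fun (r : Fin (n l)) y =>
                y ⟨⟨l, r⟩, hmem l h r⟩) := by
            ext y
            rw [dif_neg h, Finset.sup'_apply]
          rw [heq]
          exact hm
      have hcomp := hbase.comp hφm hψm
      have hl : φ ∘ (fun a (p : ({⟨i, j⟩} : Finset (Σ l, Fin (n l)))) =>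
          T p.1.1 p.1.2 a) = T i j := rfl
      have hr : ψ ∘ (fun a (p : ((Finset.univ.filter
          fun p : Σ l, Fin (n l) => p.1 ≠ i) : Finset (Σ l, Fin (n l)))) =>
          T p.1.1 p.1.2 a) = Y := by
        funext ω
        funext l
        by_cases h : l = i
        · simp only [Function.comp_apply, hψ, hY, dif_pos h]
        · simp only [Function.comp_apply, hψ, hY, dif_neg h, hM]
      rw [hl, hr] at hcomp
      exact hcomp
    -- express the event as a preimage under the pair map
    set C : Set (ℝ × (Fin L → ℝ)) := {z | ∀ l ∈ Finset.univ.erase i, z.1 ≤ z.2 l} with hC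
    have hCmeas : MeasurableSet C := by
      have hCeq : C = ⋂ l ∈ Finset.univ.erase i,
          {z : ℝ × (Fin L → ℝ) | z.1 ≤ z.2 l} := by
        ext z; simp [hC, Set.mem_iInter]
      rw [hCeq]
      exact MeasurableSet.biInter (Set.to_countable _) fun l _ =>
        measurableSet_le measurable_fst ((measurable_pi_apply l).comp measurable_snd)
    have hpre : A j = (fun ω => (T i j ω, Y ω)) ⁻¹' C := by
      ext ω
      simp only [hA, hC, Set.mem_setOf_eq, Set.mem_preimage, hY]
      refine forall_congr' fun l => ?_
      refine forall_congr' fun hl => ?_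
      rw [dif_neg (Finset.ne_of_mem_erase hl)]
    have hmapXY : P.map (fun ω => (T i j ω, Y ω)) = (P.map (T i j)).prod (P.map Y) :=
      (indepFun_iff_map_prod_eq_prod_map_map (hTmeas i j).aemeasurable
        hYmeas.aemeasurable).mp hXY
    have hPAeq : P (A j) = ((P.map (T i j)).prod (P.map Y)) C := by
      rw [hpre, ← hmapXY, Measure.map_apply ((hTmeas i j).prodMk hYmeas) hCmeas]
    rw [hPAeq, Measure.prod_apply hCmeas, hmap j]
    refine lintegral_congr fun t => ?_
    rw [Measure.map_apply hYmeas (measurable_prodMk_left hCmeas)]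
    have hYpre : Y ⁻¹' (Prod.mk t ⁻¹' C) =
        ⋂ l ∈ Finset.univ.erase i, {ω | t ≤ M l ω} := by
      ext ω
      simp only [Set.mem_preimage, hC, Set.mem_setOf_eq, Set.mem_iInter, hY]
      refine forall_congr' fun l => ?_
      refine forall_congr' fun hl => ?_
      rw [dif_neg (Finset.ne_of_mem_erase hl)]
    rw [hYpre, hprod t, hgE]
  -- convert the lintegral against w into a Lebesgue lintegral on (0, ∞)
  set I : ENNReal := ∫⁻ t in Set.Ioi (0:ℝ), gE t * ENNReal.ofReal (f t) with hI
  have hlint : (∫⁻ t, gE t ∂w) = I := by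
    rw [hw, lintegral_withDensity_eq_lintegral_mul _ hfmeas.ennreal_ofReal hgEmeas]
    have hsplit := lintegral_add_compl (μ := volume)
      (f := fun t => ENNReal.ofReal (f t) * gE t) (measurableSet_Ioi (a := (0:ℝ)))
    have hzero : (∫⁻ t in (Set.Ioi (0:ℝ))ᶜ, ENNReal.ofReal (f t) * gE t) = 0 := by
      have hcle : (∫⁻ t in (Set.Ioi (0:ℝ))ᶜ, ENNReal.ofReal (f t) * gE t)
          ≤ ∫⁻ t in Set.Iic (0:ℝ), ENNReal.ofReal (f t) := by
        rw [Set.compl_Ioi]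
        refine lintegral_mono fun t => ?_
        calc ENNReal.ofReal (f t) * gE t ≤ ENNReal.ofReal (f t) * 1 :=
              mul_le_mul_right (hgE1 t) _
          _ = ENNReal.ofReal (f t) := mul_one _
      have hw0 : (∫⁻ t in Set.Iic (0:ℝ), ENNReal.ofReal (f t)) = 0 := by
        have hwic := hwIic 0
        rw [hw, withDensity_apply _ measurableSet_Iic] at hwic
        rw [hwic, hFi0, ENNReal.ofReal_zero]
      exact le_antisymm (le_trans hcle (le_of_eq hw0)) zero_le
    have : (∫⁻ t, ENNReal.ofReal (f t) * gE t)
        = ∫⁻ t in Set.Ioi (0:ℝ), ENNReal.ofReal (f t) * gE t := by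
      rw [← hsplit, hzero, add_zero]
    calc (∫⁻ t, ((fun s => ENNReal.ofReal (f s)) * gE) t)
        = ∫⁻ t, ENNReal.ofReal (f t) * gE t := by
          exact lintegral_congr fun t => rfl
      _ = ∫⁻ t in Set.Ioi (0:ℝ), ENNReal.ofReal (f t) * gE t := this
      _ = I := by
          rw [hI]
          exact lintegral_congr fun t => mul_comm _ _
  have hfac_nn : ∀ (l : Fin L) (t : ℝ), 0 ≤ 1 - F l t ^ (n l) := fun l t =>
    sub_nonneg.mpr (pow_le_one₀ (hF01 l t).1 (hF01 l t).2)
  have hRHS : (∫ t in Set.Ioi (0:ℝ),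
      (∏ l ∈ Finset.univ.erase i, (1 - F l t ^ (n l))) * f t) = I.toReal := by
    rw [integral_eq_lintegral_of_nonneg_ae
      (Filter.Eventually.of_forall fun t =>
        mul_nonneg (Finset.prod_nonneg fun l _ => hfac_nn l t) (hfnn t))
      (((Finset.measurable_prod (Finset.univ.erase i) fun l _ =>
        measurable_const.sub ((hFcont l).measurable.pow_const (n l))).mul
          hfmeas).aestronglyMeasurable)]
    rw [hI]
    congr 1
    refine lintegral_congr fun t => ?_
    rw [ENNReal.ofReal_mul (Finset.prod_nonneg fun l _ => hfac_nn l t)]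
    congr 1
    rw [ENNReal.ofReal_prod_of_nonneg fun l _ => hfac_nn l t]
    refine Finset.prod_congr rfl fun l _ => ?_
    rw [ENNReal.ofReal_sub _ (pow_nonneg (hF01 l t).1 _), ENNReal.ofReal_one,
      ENNReal.ofReal_pow (hF01 l t).1]
  -- final assembly
  have hcard : ∀ ω : Ω, ((Finset.univ.filter fun j : Fin (n i) =>
        T i j ω ≤
          Finset.univ.inf' (Finset.univ_nonempty_iff.mpr (Fin.pos_iff_nonempty.mp hL))
            (fun l : Fin L =>
              Finset.univ.sup'
                (Finset.univ_nonempty_iff.mpr (Fin.pos_iff_nonempty.mp (hn l)))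
                (fun r : Fin (n l) => T l r ω))).card : ℝ)
      = ∑ j : Fin (n i), (A j).indicator (fun _ => (1:ℝ)) ω := by
    intro ω
    rw [Finset.card_filter]
    push_cast
    refine Finset.sum_congr rfl fun j _ => ?_
    have hiff : (T i j ω ≤
        Finset.univ.inf' (Finset.univ_nonempty_iff.mpr (Fin.pos_iff_nonempty.mp hL))
          (fun l : Fin L =>
            Finset.univ.sup'
              (Finset.univ_nonempty_iff.mpr (Fin.pos_iff_nonempty.mp (hn l)))
              (fun r : Fin (n l) => T l r ω))) ↔ ω ∈ A j := by
      rw [Finset.le_inf'_iff]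
      constructor
      · intro h l hl
        exact h l (Finset.mem_univ l)
      · intro h l _
        by_cases hli : l = i
        · subst hli
          exact Finset.le_sup' (fun r : Fin (n l) => T l r ω) (Finset.mem_univ j)
        · exact h l (Finset.mem_erase.mpr ⟨hli, Finset.mem_univ l⟩)
    by_cases hc : ω ∈ A j
    · rw [if_pos (hiff.mpr hc), Set.indicator_of_mem hc]
    · rw [if_neg (fun hh => hc (hiff.mp hh)), Set.indicator_of_notMem hc]
  calc (∫ ω, ((Finset.univ.filter fun j : Fin (n i) =>
        T i j ω ≤
          Finset.univ.inf' (Finset.univ_nonempty_iff.mpr (Fin.pos_iff_nonempty.mp hL))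
            (fun l : Fin L =>
              Finset.univ.sup'
                (Finset.univ_nonempty_iff.mpr (Fin.pos_iff_nonempty.mp (hn l)))
                (fun r : Fin (n l) => T l r ω))).card : ℝ) ∂P)
      = ∫ ω, (∑ j : Fin (n i), (A j).indicator (fun _ => (1:ℝ)) ω) ∂P :=
        integral_congr_ae (Filter.Eventually.of_forall hcard)
    _ = ∑ j : Fin (n i), ∫ ω, (A j).indicator (fun _ => (1:ℝ)) ω ∂P :=
        integral_finset_sum _ fun j _ =>
          (integrable_const (1:ℝ)).indicator (hAmeas j)
    _ = ∑ _j : Fin (n i), I.toReal := by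
        refine Finset.sum_congr rfl fun j _ => ?_
        rw [← hlint, ← hPA j]
        exact integral_indicator_one (hAmeas j)
    _ = (n i : ℝ) * I.toReal := by
        rw [Finset.sum_const, Finset.card_univ, Fintype.card_fin, nsmul_eq_mul]
    _ = (n i : ℝ) * ∫ t in Set.Ioi (0:ℝ),
          (∏ l ∈ Finset.univ.erase i, (1 - F l t ^ (n l))) * f t := by
        rw [hRHS]
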